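/- Let E be the Euclidean plane ℝ² with its Euclidean norm, let c₂ := (4, 0) ∈ E, c₃ := (1, −4) ∈ E, and let x₀ ∈ E. Then there exists a 1-Lipschitz curve x : ℝ → E with x(0) = x₀ and some t′ ∈ [0, 15] such that ‖x(s) − c₂‖ ≤ 4 for all s ∈ [t′, t′ + 10] and ‖x(s′) − c₃‖ ≤ 2 for some s′ ∈ [t′ + 5, t′ + 10], if and only if ‖x₀ − c₂‖ ≤ 19. -/
import Mathlib

private lemma clamp_lip (M s t : ℝ) (hs : s ≤ t) :
    min (max t 0) M - min (max s 0) M ≤ t - s := by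
  simp only [min_def, max_def]
  split_ifs <;> linarith

private lemma clamp_mono (M s t : ℝ) (hs : s ≤ t) :
    min (max s 0) M ≤ min (max t 0) M := by
  simp only [min_def, max_def]
  split_ifs <;> linarith


/-- The satisfying set of `F_{[0,15]}(G_{[0,10]} μ₂ ∧ F_{[5,10]} μ₃)` for the single
integrator, with `μ₂` the closed ball of radius 4 around `c₂ = (4, 0)` and `μ₃` the closed
ball of radius 2 around `c₃ = (1, −4)`, is the closed ball of radius 19 around `c₂`:
the set node `𝕏₂` of the case study. -/
theorem single_integrator_node_X2
    (c₂ c₃ x₀ : EuclideanSpace ℝ (Fin 2))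
    (hc₂0 : c₂ 0 = 4) (hc₂1 : c₂ 1 = 0) (hc₃0 : c₃ 0 = 1) (hc₃1 : c₃ 1 = -4) :
    (∃ x : ℝ → EuclideanSpace ℝ (Fin 2), LipschitzWith 1 x ∧ x 0 = x₀ ∧
      ∃ t' ∈ Set.Icc (0:ℝ) 15,
        (∀ s ∈ Set.Icc t' (t' + 10), ‖x s - c₂‖ ≤ 4) ∧
        (∃ s' ∈ Set.Icc (t' + 5) (t' + 10), ‖x s' - c₃‖ ≤ 2)) ↔
    ‖x₀ - c₂‖ ≤ 19 := by
  constructor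
  · rintro ⟨x, hlip, hx0, t', ⟨ht0, ht15⟩, hball, -⟩
    have h1 : ‖x t' - c₂‖ ≤ 4 := hball t' ⟨le_refl _, by linarith⟩
    have h2 : ‖x 0 - x t'‖ ≤ t' := by
      have := hlip.dist_le_mul 0 t'
      rw [dist_eq_norm] at this
      simpa [Real.dist_eq, abs_of_nonneg ht0] using this
    calc ‖x₀ - c₂‖ = ‖(x 0 - x t') + (x t' - c₂)‖ := by rw [hx0]; abel_nf
      _ ≤ ‖x 0 - x t'‖ + ‖x t' - c₂‖ := norm_add_le _ _
      _ ≤ 19 := by linarith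
  · intro hx19
    classical
    have hw : ‖c₃ - c₂‖ = 5 := by
      rw [EuclideanSpace.norm_eq]
      simp [Fin.sum_univ_two, hc₂0, hc₂1, hc₃0, hc₃1]
      rw [show ((1:ℝ) - 4)^2 + 4^2 = 5^2 by norm_num]
      exact Real.sqrt_sq (by norm_num)
    set d : ℝ := ‖x₀ - c₂‖ with hd
    have hd0 : 0 ≤ d := norm_nonneg _
    set u : EuclideanSpace ℝ (Fin 2) :=
      if x₀ = c₂ then 0 else d⁻¹ • (c₂ - x₀) with hu
    have hdu : d • u = c₂ - x₀ := by
      rw [hu]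
      split_ifs with h
      · simp [h, hd]
      · rw [smul_smul, mul_inv_cancel₀, one_smul]
        rw [hd]
        simpa [sub_eq_zero] using h
    have hun : ‖u‖ ≤ 1 := by
      rw [hu]; split_ifs with h
      · simp
      · have hdpos : (0:ℝ) < d := by
          rw [hd]; exact norm_pos_iff.mpr (sub_ne_zero.mpr h)
        have hcx : ‖c₂ - x₀‖ = d := by rw [hd, norm_sub_rev]
        rw [norm_smul, norm_inv, Real.norm_eq_abs, abs_of_nonneg hd0, hcx,
          inv_mul_cancel₀ (ne_of_gt hdpos)]
    set v : EuclideanSpace ℝ (Fin 2) := (5:ℝ)⁻¹ • (c₃ - c₂) with hv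
    have hvn : ‖v‖ = 1 := by
      rw [hv, norm_smul, hw]; norm_num
    set φ : ℝ → ℝ := fun t => min (max t 0) (d + 3) with hφ
    set a : ℝ → ℝ := fun t => min (φ t) d with ha
    set b : ℝ → ℝ := fun t => φ t - a t with hb
    set x : ℝ → EuclideanSpace ℝ (Fin 2) := fun t => x₀ + a t • u + b t • v with hxdef
    have hφle : ∀ t, φ t ≤ d + 3 := fun t => min_le_right _ _
    have hale : ∀ t, a t ≤ d := fun t => min_le_right _ _
    have haφ : ∀ t, a t ≤ φ t := fun t => min_le_left _ _
    have hbnn : ∀ t, 0 ≤ b t := fun t => sub_nonneg.mpr (haφ t)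
    have hble : ∀ t, b t ≤ 3 := by
      intro t
      simp only [hb, ha]
      rcases le_total (φ t) d with h | h
      · simp [min_eq_left h]
      · rw [min_eq_right h]; have := hφle t; linarith
    have hkey : ∀ s t : ℝ, s ≤ t → (a t - a s) + (b t - b s) ≤ t - s ∧
        a s ≤ a t ∧ b s ≤ b t := by
      intro s t hst
      have hφm : φ s ≤ φ t := clamp_mono _ _ _ hst
      have hφl : φ t - φ s ≤ t - s := clamp_lip _ _ _ hst
      have ham : a s ≤ a t := min_le_min hφm le_rfl
      have hasub : a t - a s ≤ φ t - φ s := by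
        simp only [ha]
        rcases le_total (φ s) d with h | h
        · have := min_le_left (φ t) d
          rw [min_eq_left h]; linarith
        · rw [min_eq_right h, min_eq_right (le_trans h hφm)]; linarith
      refine ⟨by simp only [hb]; linarith, ham, by simp only [hb]; linarith⟩
    have hlip : LipschitzWith 1 x := by
      apply LipschitzWith.of_dist_le_mul
      intro s t
      rw [dist_eq_norm, Real.dist_eq, NNReal.coe_one, one_mul]
      have hdiff : x s - x t = (a s - a t) • u + (b s - b t) • v := by
        simp only [hxdef, sub_smul]
        abel
      rw [hdiff]
      calc ‖(a s - a t) • u + (b s - b t) • v‖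
          ≤ ‖(a s - a t) • u‖ + ‖(b s - b t) • v‖ := norm_add_le _ _
        _ = |a s - a t| * ‖u‖ + |b s - b t| * ‖v‖ := by
            rw [norm_smul, norm_smul, Real.norm_eq_abs, Real.norm_eq_abs]
        _ ≤ |a s - a t| * 1 + |b s - b t| * 1 := by
            gcongr <;> first | exact hun | exact hvn.le | positivity
        _ ≤ |s - t| := by
            rcases le_total s t with h | h
            · obtain ⟨h1, h2, h3⟩ := hkey s t h
              rw [abs_of_nonpos (by linarith), abs_of_nonpos (by linarith),
                abs_of_nonpos (by linarith)]
              linarith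
            · obtain ⟨h1, h2, h3⟩ := hkey t s h
              rw [abs_of_nonneg (by linarith), abs_of_nonneg (by linarith),
                abs_of_nonneg (by linarith)]
              linarith
    have hφ0 : φ 0 = 0 := by
      simp only [hφ]; rw [max_self, min_eq_left (by linarith)]
    have ha0 : a 0 = 0 := by
      simp only [ha]; rw [hφ0, min_eq_left hd0]
    have hb0 : b 0 = 0 := by
      simp only [hb]; rw [hφ0, ha0]; ring
    have hx0 : x 0 = x₀ := by
      simp only [hxdef, ha0, hb0]; simp
    have hx₀eq : x₀ = c₂ - d • u := by rw [hdu]; abel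
    have hdist2 : ∀ t, ‖x t - c₂‖ ≤ (d - a t) + b t := by
      intro t
      have hdiff : x t - c₂ = (a t - d) • u + b t • v := by
        simp only [hxdef, sub_smul]
        rw [hx₀eq]
        abel
      rw [hdiff]
      calc ‖(a t - d) • u + b t • v‖ ≤ ‖(a t - d) • u‖ + ‖b t • v‖ := norm_add_le _ _
        _ = |a t - d| * ‖u‖ + |b t| * ‖v‖ := by
            rw [norm_smul, norm_smul, Real.norm_eq_abs, Real.norm_eq_abs]
        _ ≤ |a t - d| * 1 + |b t| * 1 := by
            gcongr <;> first | exact hun | exact hvn.le | positivity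
        _ = (d - a t) + b t := by
            rw [abs_of_nonpos (by have := hale t; linarith), abs_of_nonneg (hbnn t)]
            ring
    set t' : ℝ := max (d - 4) 0 with ht'
    have ht'0 : 0 ≤ t' := le_max_right _ _
    have ht'd : t' ≥ d - 4 := le_max_left _ _
    have ht'ld : t' ≤ d := by
      rw [ht']; exact max_le (by linarith) hd0
    refine ⟨x, hlip, hx0, t',
      ⟨ht'0, by rw [ht']; exact max_le (by linarith) (by norm_num)⟩, ?_, ?_⟩
    · intro s hs
      obtain ⟨hs1, hs2⟩ := hs
      have hφt' : φ t' = t' := by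
        simp only [hφ]; rw [max_eq_left ht'0, min_eq_left (by linarith)]
      have hφs : t' ≤ φ s := by
        rw [← hφt']
        exact clamp_mono _ _ _ hs1
      refine le_trans (hdist2 s) ?_
      have := hφle s
      simp only [hb, ha]
      rcases le_total (φ s) d with h | h
      · rw [min_eq_left h]; linarith
      · rw [min_eq_right h]; linarith
    · refine ⟨max (d + 3) (t' + 5), ⟨le_max_right _ _, ?_⟩, ?_⟩
      · apply max_le
        · rw [ht']; rcases le_total (d - 4) 0 with h | h
          · rw [max_eq_right h]; linarith
          · rw [max_eq_left h]; linarith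
        · linarith
      · set s' : ℝ := max (d + 3) (t' + 5) with hs'
        have hs'ge : d + 3 ≤ s' := le_max_left _ _
        have hφs' : φ s' = d + 3 := by
          simp only [hφ]
          rw [max_eq_left (by linarith), min_eq_right (le_refl _ |>.trans hs'ge)]
        have has' : a s' = d := by
          simp only [ha]; rw [hφs', min_eq_right (by linarith)]
        have hbs' : b s' = 3 := by
          simp only [hb]; rw [hφs', has']; ring
        have hxs' : x s' = c₂ + (3:ℝ) • v := by
          simp only [hxdef, has', hbs']
          rw [hx₀eq]; abel
        rw [hxs']
        have hre : c₂ + (3:ℝ) • v - c₃ = -((2/5 : ℝ) • (c₃ - c₂)) := by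
          rw [hv, smul_smul]
          rw [show (3:ℝ) * 5⁻¹ = 3/5 by norm_num]
          have h1 : c₂ - c₃ = -(c₃ - c₂) := by abel
          calc c₂ + (3/5 : ℝ) • (c₃ - c₂) - c₃
              = (c₂ - c₃) + (3/5 : ℝ) • (c₃ - c₂) := by abel
            _ = -((c₃ - c₂)) + (3/5 : ℝ) • (c₃ - c₂) := by rw [h1]
            _ = -((2/5 : ℝ) • (c₃ - c₂)) := by
                rw [show (2/5 : ℝ) = 1 - 3/5 by norm_num, sub_smul, one_smul]; abel
        rw [hre, norm_neg, norm_smul, Real.norm_eq_abs, hw,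
          abs_of_nonneg (by norm_num : (0:ℝ) ≤ 2/5)]
        norm_num
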